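/- arXiv:1903.08232 — 5 statements merged into one kernel-verified Lean document; each statement's English description precedes it below -/
import Mathlib

section
/- The number of $1$-independent sets in any $r$-uniform hypergraph with $n$ vertices and $e$ edges is at most the number of $1$-independent sets in the colex $r$-graph $\mathcal{C}_r(n,e)$. -/
/-- The colex `r`-graph on `[n] = {0, …, n-1}` with `e` edges: the set of `r`-subsets of
`[n]` that have fewer than `e` sets colex-below them, i.e. the first `e` sets in colex order. -/
def colexGraph (n r e : ℕ) : Finset (Finset ℕ) :=
  ((Finset.range n).powersetCard r).filter (fun E =>
    (((Finset.range n).powersetCard r).filter (fun F => toColex F < toColex E)).card < e)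

/-- The number of 1-independent sets of a hypergraph on `[n]`. -/
def oneIndepCount (n : ℕ) (H : Finset (Finset ℕ)) : ℕ :=
  ((Finset.range n).powerset.filter (fun I => ∀ E ∈ H, (I ∩ E).card < 1)).card

open Finset

lemma oneIndepCount_eq (n : ℕ) (H : Finset (Finset ℕ)) :
    oneIndepCount n H = 2 ^ ((Finset.range n \ H.sup id).card) := by
  rw [oneIndepCount, ← Finset.card_powerset]
  congr 1
  ext I
  simp only [mem_filter, mem_powerset, subset_sdiff, Nat.lt_one_iff, card_eq_zero,
    ← disjoint_iff_inter_eq_empty, Finset.disjoint_sup_right, id]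

theorem oneIndep_le_colex (n r e : ℕ) (H : Finset (Finset ℕ))
    (hsub : H ⊆ (Finset.range n).powersetCard r) (hcard : H.card = e) :
    oneIndepCount n H ≤ oneIndepCount n (colexGraph n r e) := by
  set V : Finset ℕ := H.sup id with hV
  have hVsub : V ⊆ Finset.range n :=
    Finset.sup_le fun E hE => (Finset.mem_powersetCard.1 (hsub hE)).1
  have hVn : V.card ≤ n := by
    simpa using Finset.card_le_card hVsub
  -- e ≤ choose (V.card) r
  have he : e ≤ V.card.choose r := by
    rw [← hcard, ← Finset.card_powersetCard r V]
    apply Finset.card_le_card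
    intro E hE
    rw [Finset.mem_powersetCard]
    exact ⟨Finset.le_sup (f := id) hE, (Finset.mem_powersetCard.1 (hsub hE)).2⟩
  -- every edge of colexGraph is a subset of range V.card
  have hkey : ∀ E ∈ colexGraph n r e, E ⊆ Finset.range V.card := by
    intro E hE
    rw [colexGraph, Finset.mem_filter, Finset.mem_powersetCard] at hE
    obtain ⟨⟨hEn, hEr⟩, hlt⟩ := hE
    by_contra hcon
    rw [Finset.not_subset] at hcon
    obtain ⟨x, hxE, hx⟩ := hcon
    rw [Finset.mem_range, not_lt] at hx
    have hsubfilt : (Finset.range V.card).powersetCard r ⊆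
        ((Finset.range n).powersetCard r).filter
          (fun F => toColex F < toColex E) := by
      intro F hF
      rw [Finset.mem_powersetCard] at hF
      obtain ⟨hFk, hFr⟩ := hF
      have hxF : x ∉ F := fun h => absurd (Finset.mem_range.1 (hFk h)) (not_lt.2 hx)
      rw [Finset.mem_filter, Finset.mem_powersetCard]
      refine ⟨⟨hFk.trans (Finset.range_subset_range.2 hVn), hFr⟩, ?_⟩
      rw [Finset.Colex.toColex_lt_toColex_iff_exists_forall_lt]
      exact ⟨x, hxE, hxF, fun b hb _ => lt_of_lt_of_le (Finset.mem_range.1 (hFk hb)) hx⟩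
    have := Finset.card_le_card hsubfilt
    rw [Finset.card_powersetCard, Finset.card_range] at this
    omega
  -- so sup of colexGraph is small
  have hVc : ((colexGraph n r e).sup id).card ≤ V.card := by
    have : (colexGraph n r e).sup id ⊆ Finset.range V.card :=
      Finset.sup_le fun E hE => hkey E hE
    simpa using Finset.card_le_card this
  rw [oneIndepCount_eq, oneIndepCount_eq, ← hV]
  apply Nat.pow_le_pow_right (by norm_num)
  have h1 : (Finset.range n \ V).card = n - V.card := by
    rw [Finset.card_sdiff_of_subset hVsub, Finset.card_range]
  have hVcsub : (colexGraph n r e).sup id ⊆ Finset.range n :=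
    Finset.sup_le fun E hE => by
      rw [colexGraph, Finset.mem_filter, Finset.mem_powersetCard] at hE
      exact hE.1.1
  have h2 : (Finset.range n \ (colexGraph n r e).sup id).card
      = n - ((colexGraph n r e).sup id).card := by
    rw [Finset.card_sdiff_of_subset hVcsub, Finset.card_range]
  omega
end

section
/- Let $\mathcal{H}$ be a hypergraph on vertex set $[n]$ and $0 \le j < i \le n-1$. Then for every $s \ge 1$, the number of $s$-independent sets does not decrease under the $(i,j)$-shift: $i_s(\mathcal{H}_{i\to j}) \ge i_s(\mathcal{H})$. -/
open Finset

/-- The `(i,j)`-shift of a single edge: replace `i` by `j` when `E ∩ {i,j} = {i}`. -/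
def shiftEdge (i j : ℕ) (E : Finset ℕ) : Finset ℕ :=
  if i ∈ E ∧ j ∉ E then insert j (E.erase i) else E

/-- The `(i,j)`-shift of an edge set. -/
def shiftSet (i j : ℕ) (H : Finset (Finset ℕ)) : Finset (Finset ℕ) :=
  H.image (shiftEdge i j) ∪ H.filter (fun E => shiftEdge i j E ∈ H)

lemma mem_shiftSet {i j : ℕ} {H : Finset (Finset ℕ)} {F : Finset ℕ} :
    F ∈ shiftSet i j H ↔ (∃ G ∈ H, shiftEdge i j G = F) ∨ (F ∈ H ∧ shiftEdge i j F ∈ H) := by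
  simp [shiftSet, Finset.mem_union, Finset.mem_image, Finset.mem_filter]

-- E1 : I ∩ insert j (G.erase i) = insert j (I ∩ G) when j∈I, i∉I, j∉G
lemma E1 {i j : ℕ} (hij : j ≠ i) {I G : Finset ℕ} (hjI : j ∈ I) (hiI : i ∉ I) (hjG : j ∉ G) :
    I ∩ insert j (G.erase i) = insert j (I ∩ G) := by
  ext x
  simp only [Finset.mem_inter, Finset.mem_insert, Finset.mem_erase]
  constructor
  · rintro ⟨hxI, rfl | ⟨hxi, hxG⟩⟩
    · exact Or.inl rfl
    · exact Or.inr ⟨hxI, hxG⟩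
  · rintro (rfl | ⟨hxI, hxG⟩)
    · exact ⟨hjI, Or.inl rfl⟩
    · exact ⟨hxI, Or.inr ⟨fun h => hiI (h ▸ hxI), hxG⟩⟩

lemma E1card {i j : ℕ} (hij : j ≠ i) {I G : Finset ℕ} (hjI : j ∈ I) (hiI : i ∉ I) (hjG : j ∉ G) :
    (I ∩ insert j (G.erase i)).card = (I ∩ G).card + 1 := by
  rw [E1 hij hjI hiI hjG, Finset.card_insert_of_notMem (by simp [hjG])]

-- E2 : (insert i (I.erase j)) ∩ G = insert i (I ∩ G) when i∈G, j∉G, i∉I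
lemma E2 {i j : ℕ} {I G : Finset ℕ} (hiG : i ∈ G) (hjG : j ∉ G) :
    (insert i (I.erase j)) ∩ G = insert i (I ∩ G) := by
  ext x
  simp only [Finset.mem_inter, Finset.mem_insert, Finset.mem_erase]
  constructor
  · rintro ⟨rfl | ⟨hxj, hxI⟩, hxG⟩
    · exact Or.inl rfl
    · exact Or.inr ⟨hxI, hxG⟩
  · rintro (rfl | ⟨hxI, hxG⟩)
    · exact ⟨Or.inl rfl, hiG⟩
    · exact ⟨Or.inr ⟨fun h => hjG (h ▸ hxG), hxI⟩, hxG⟩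

lemma E2card {i j : ℕ} {I G : Finset ℕ} (hiG : i ∈ G) (hjG : j ∉ G) (hiI : i ∉ I) :
    ((insert i (I.erase j)) ∩ G).card = (I ∩ G).card + 1 := by
  rw [E2 hiG hjG, Finset.card_insert_of_notMem (by simp [hiI])]

-- structure of bad independent sets
lemma bad_structure {s i j : ℕ} (hij : j < i) {H : Finset (Finset ℕ)} {I : Finset ℕ}
    (hI : ∀ E ∈ H, (I ∩ E).card < s)
    {F : Finset ℕ} (hF : F ∈ shiftSet i j H) (hcard : s ≤ (I ∩ F).card) :
    j ∈ I ∧ i ∉ I ∧ ∃ G ∈ H, i ∈ G ∧ j ∉ G ∧ s ≤ (I ∩ G).card + 1 := by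
  have hFH : F ∉ H := fun h => absurd (hI F h) (by omega)
  rcases mem_shiftSet.mp hF with ⟨G, hG, rfl⟩ | ⟨h1, _⟩
  · by_cases hc : i ∈ G ∧ j ∉ G
    · rw [shiftEdge, if_pos hc] at hcard hFH
      obtain ⟨hiG, hjG⟩ := hc
      -- I ∩ insert j (G.erase i) ⊆ insert j ((I ∩ G).erase i)
      have hsub : I ∩ insert j (G.erase i) ⊆ insert j ((I ∩ G).erase i) := by
        intro x hx
        simp only [Finset.mem_inter, Finset.mem_insert, Finset.mem_erase] at hx ⊢
        tauto
      have hG' := hI G hG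
      have hjI : j ∈ I := by
        by_contra hjI
        have : I ∩ insert j (G.erase i) ⊆ I ∩ G := by
          intro x hx
          simp only [Finset.mem_inter, Finset.mem_insert, Finset.mem_erase] at hx ⊢
          rcases hx with ⟨hxI, rfl | ⟨_, hxG⟩⟩
          · exact absurd hxI hjI
          · exact ⟨hxI, hxG⟩
        have := Finset.card_le_card this
        omega
      have hiI : i ∉ I := by
        by_contra hiI
        have h1 := Finset.card_le_card hsub
        have h2 : (insert j ((I ∩ G).erase i)).card ≤ (I ∩ G).card := by
          have : i ∈ I ∩ G := Finset.mem_inter.mpr ⟨hiI, hiG⟩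
          have := Finset.card_erase_of_mem this
          have h3 := Finset.card_insert_le j ((I ∩ G).erase i)
          have h4 : 1 ≤ (I ∩ G).card := Finset.card_pos.mpr ⟨i, Finset.mem_inter.mpr ⟨hiI, hiG⟩⟩
          omega
        omega
      refine ⟨hjI, hiI, G, hG, hiG, hjG, ?_⟩
      have := E1card (by omega) hjI hiI hjG (G := G)
      omega
    · rw [shiftEdge, if_neg hc] at hFH
      exact absurd hG hFH
  · exact absurd h1 hFH

-- σ I is independent in the shifted family
lemma sigma_indep {s i j : ℕ} (hij : j < i) {H : Finset (Finset ℕ)} {I : Finset ℕ}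
    (hI : ∀ E ∈ H, (I ∩ E).card < s) (hjI : j ∈ I) (hiI : i ∉ I) :
    ∀ F ∈ shiftSet i j H, ((insert i (I.erase j)) ∩ F).card < s := by
  intro F hF
  -- helper for F ∈ H with ¬(i∈F ∧ j∉F)
  have inH : ∀ F ∈ H, ¬(i ∈ F ∧ j ∉ F) → (insert i (I.erase j) ∩ F).card < s := by
    intro F hFH hc
    have hIF := hI F hFH
    by_cases hjF : j ∈ F
    · -- insert i (I.erase j) ∩ F ⊆ insert i ((I ∩ F).erase j)
      have hsub : insert i (I.erase j) ∩ F ⊆ insert i ((I ∩ F).erase j) := by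
        intro x hx
        simp only [Finset.mem_inter, Finset.mem_insert, Finset.mem_erase] at hx ⊢
        tauto
      have h1 := Finset.card_le_card hsub
      have hjIF : j ∈ I ∩ F := Finset.mem_inter.mpr ⟨hjI, hjF⟩
      have h2 := Finset.card_erase_of_mem hjIF
      have h3 := Finset.card_insert_le i ((I ∩ F).erase j)
      have h4 : 1 ≤ (I ∩ F).card := Finset.card_pos.mpr ⟨j, hjIF⟩
      omega
    · have hiF : i ∉ F := fun h => hc ⟨h, hjF⟩
      have : insert i (I.erase j) ∩ F = I ∩ F := by
        ext x
        simp only [Finset.mem_inter, Finset.mem_insert, Finset.mem_erase]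
        constructor
        · rintro ⟨rfl | ⟨hxj, hxI⟩, hxF⟩
          · exact absurd hxF hiF
          · exact ⟨hxI, hxF⟩
        · rintro ⟨hxI, hxF⟩
          exact ⟨Or.inr ⟨fun h => hjF (h ▸ hxF), hxI⟩, hxF⟩
      have hcc : (insert i (I.erase j) ∩ F).card = (I ∩ F).card := by rw [this]
      omega
  rcases mem_shiftSet.mp hF with ⟨G, hG, rfl⟩ | ⟨h1, h2⟩
  · by_cases hc : i ∈ G ∧ j ∉ G
    · rw [shiftEdge, if_pos hc]
      obtain ⟨hiG, hjG⟩ := hc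
      have hsub : insert i (I.erase j) ∩ insert j (G.erase i) ⊆ I ∩ G := by
        intro x hx
        simp only [Finset.mem_inter, Finset.mem_insert, Finset.mem_erase] at hx ⊢
        rcases hx with ⟨rfl | ⟨hxj, hxI⟩, rfl | ⟨hxi, hxG⟩⟩
        · omega
        · exact absurd rfl hxi
        · exact absurd rfl hxj
        · exact ⟨hxI, hxG⟩
      have := Finset.card_le_card hsub
      have := hI G hG
      omega
    · rw [shiftEdge, if_neg hc]
      exact inH G hG hc
  · by_cases hc : i ∈ F ∧ j ∉ F
    · obtain ⟨hiF, hjF⟩ := hc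
      rw [shiftEdge, if_pos ⟨hiF, hjF⟩] at h2
      have h3 := hI _ h2
      have h4 := E1card (i := i) (show j ≠ i by omega) hjI hiI hjF (G := F)
      have h5 := E2card hiF hjF hiI (I := I)
      -- note I ∩ F = I ∩ F, but E1card uses I ∩ insert j (F.erase i)
      rw [h4] at h3
      rw [h5]
      omega
    · exact inH F h1 hc

/-- The number of `s`-independent sets of a hypergraph on `[n] = {0,…,n-1}`. -/
def indepCount (n s : ℕ) (H : Finset (Finset ℕ)) : ℕ :=
  ((Finset.range n).powerset.filter (fun I => ∀ E ∈ H, (I ∩ E).card < s)).card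

theorem indepCount_le_shift (n s i j : ℕ) (hs : 1 ≤ s) (hj : j < i) (hi : i ≤ n - 1)
    (H : Finset (Finset ℕ)) (hsub : ∀ E ∈ H, E ⊆ Finset.range n) :
    indepCount n s H ≤ indepCount n s (shiftSet i j H) := by
  classical
  have hin : i < n := by omega
  unfold indepCount
  set T := (Finset.range n).powerset.filter
    (fun I => ∀ E ∈ shiftSet i j H, (I ∩ E).card < s) with hT
  apply Finset.card_le_card_of_injOn
    (fun I => if ∀ E ∈ shiftSet i j H, (I ∩ E).card < s then I else insert i (I.erase j))
  · intro I hI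
    simp only [Finset.mem_coe, Finset.mem_filter, Finset.mem_powerset] at hI
    obtain ⟨hIr, hIind⟩ := hI
    by_cases hgood : ∀ E ∈ shiftSet i j H, (I ∩ E).card < s
    · simp only [if_pos hgood, hT, Finset.mem_coe, Finset.mem_filter, Finset.mem_powerset]
      exact ⟨hIr, hgood⟩
    · simp only [if_neg hgood, hT, Finset.mem_coe, Finset.mem_filter, Finset.mem_powerset]
      push_neg at hgood
      obtain ⟨F, hF, hcard⟩ := hgood
      obtain ⟨hjI, hiI, _⟩ := bad_structure hj hIind hF (by omega)
      refine ⟨?_, sigma_indep hj hIind hjI hiI⟩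
      intro x hx
      rcases Finset.mem_insert.mp hx with rfl | hx
      · exact Finset.mem_range.mpr hin
      · exact hIr (Finset.mem_of_mem_erase hx)
  · intro I₁ h₁ I₂ h₂ heq
    replace heq : (if ∀ E ∈ shiftSet i j H, (I₁ ∩ E).card < s then I₁ else insert i (I₁.erase j)) = (if ∀ E ∈ shiftSet i j H, (I₂ ∩ E).card < s then I₂ else insert i (I₂.erase j)) := heq
    simp only [Finset.coe_filter, Set.mem_setOf_eq, Finset.mem_powerset] at h₁ h₂
    obtain ⟨hIr₁, hind₁⟩ := h₁
    obtain ⟨hIr₂, hind₂⟩ := h₂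
    by_cases g₁ : ∀ E ∈ shiftSet i j H, (I₁ ∩ E).card < s <;>
      by_cases g₂ : ∀ E ∈ shiftSet i j H, (I₂ ∩ E).card < s
    · simpa [if_pos g₁, if_pos g₂] using heq
    · -- I₁ good, I₂ bad: I₁ = σ I₂, but σ I₂ not indep in H
      rw [if_pos g₁, if_neg g₂] at heq
      exfalso
      push_neg at g₂
      obtain ⟨F, hF, hcard⟩ := g₂
      obtain ⟨hjI, hiI, G, hG, hiG, hjG, hcard'⟩ := bad_structure hj hind₂ hF (by omega)
      have := E2card hiG hjG hiI (I := I₂)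
      have hn := hind₁ G hG
      rw [heq] at hn
      omega
    · rw [if_neg g₁, if_pos g₂] at heq
      exfalso
      push_neg at g₁
      obtain ⟨F, hF, hcard⟩ := g₁
      obtain ⟨hjI, hiI, G, hG, hiG, hjG, hcard'⟩ := bad_structure hj hind₁ hF (by omega)
      have := E2card hiG hjG hiI (I := I₁)
      have hn := hind₂ G hG
      rw [← heq] at hn
      omega
    · rw [if_neg g₁, if_neg g₂] at heq
      push_neg at g₁ g₂
      obtain ⟨F₁, hF₁, hc₁⟩ := g₁
      obtain ⟨F₂, hF₂, hc₂⟩ := g₂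
      obtain ⟨hjI₁, hiI₁, _⟩ := bad_structure hj hind₁ hF₁ (by omega)
      obtain ⟨hjI₂, hiI₂, _⟩ := bad_structure hj hind₂ hF₂ (by omega)
      ext x
      by_cases hxi : x = i
      · subst hxi; simp [hiI₁, hiI₂]
      by_cases hxj : x = j
      · subst hxj; simp [hjI₁, hjI₂]
      · have := Finset.ext_iff.mp heq x
        simp only [Finset.mem_insert, Finset.mem_erase, hxi, hxj, false_or] at this
        simpa [hxj] using this
end

section
/- If $\mathcal{H}$ is an $r$-uniform hypergraph on $[n]$ and $A \preccurlyeq B$ are $r$-sets with $B$ an edge of $\mathcal{H}$, then $A$ is an edge of the iterated shift $\mathcal{H}_{B \to A}$ obtained by applying the shifts $b_1 \to a_1, b_2\to a_2, \dots, b_r \to a_r$ in order. -/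
/-- `ℋ_{B→A}`: apply the shifts `b₁ → a₁, …, b_r → a_r` in order, where
`a₁ < ⋯ < a_r` and `b₁ < ⋯ < b_r` are the elements of `A` and `B`. -/
def multiShift (H : Finset (Finset ℕ)) (B A : Finset ℕ) : Finset (Finset ℕ) :=
  (List.zip (B.sort (· ≤ ·)) (A.sort (· ≤ ·))).foldl (fun H' p => shiftSet p.1 p.2 H') H

lemma shiftEdge_mem_shiftSet (i j : ℕ) (H : Finset (Finset ℕ)) (E : Finset ℕ)
    (hE : E ∈ H) : shiftEdge i j E ∈ shiftSet i j H :=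
  Finset.mem_union_left _ (Finset.mem_image_of_mem _ hE)

lemma foldl_mem_foldl (l : List (ℕ × ℕ)) :
    ∀ (H : Finset (Finset ℕ)) (E : Finset ℕ), E ∈ H →
    l.foldl (fun E p => shiftEdge p.1 p.2 E) E ∈
      l.foldl (fun H' p => shiftSet p.1 p.2 H') H := by
  induction l with
  | nil => intro H E h; exact h
  | cons p l ih => intro H E h; exact ih _ _ (shiftEdge_mem_shiftSet _ _ _ _ h)

lemma foldl_shiftEdge : ∀ (la lb : List ℕ), List.Forall₂ (· ≤ ·) la lb →
    la.Pairwise (· < ·) → lb.Pairwise (· < ·) →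
    ∀ S : Finset ℕ, (∀ x ∈ S, ∀ a ∈ la, x < a) →
    (List.zip lb la).foldl (fun E p => shiftEdge p.1 p.2 E) (S ∪ lb.toFinset)
      = S ∪ la.toFinset := by
  intro la lb h
  induction h with
  | nil => simp
  | @cons a b la lb hab htail ih =>
    intro hla hlb S hS
    obtain ⟨ha_lt, hla'⟩ := List.pairwise_cons.mp hla
    obtain ⟨hb_lt, hlb'⟩ := List.pairwise_cons.mp hlb
    have hbS : b ∉ S := fun hb => absurd (lt_of_lt_of_le (hS b hb a (by simp)) hab) (lt_irrefl b)
    have hblb : b ∉ lb.toFinset := fun hb => absurd (hb_lt b (List.mem_toFinset.mp hb)) (lt_irrefl b)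
    have step : shiftEdge b a (S ∪ (b :: lb).toFinset) = insert a S ∪ lb.toFinset := by
      have hE : S ∪ (b :: lb).toFinset = insert b (S ∪ lb.toFinset) := by
        simp [Finset.union_comm, Finset.insert_union, Finset.union_comm]
      rcases eq_or_lt_of_le hab with heq | hlt
      · subst heq
        have : ¬ (a ∈ S ∪ (a :: lb).toFinset ∧ a ∉ S ∪ (a :: lb).toFinset) := by tauto
        rw [shiftEdge, if_neg this, hE, Finset.insert_union]
      · have haS : a ∉ S := fun ha => absurd (hS a ha a (by simp)) (lt_irrefl a)
        have halb : a ∉ lb.toFinset := fun ha =>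
          absurd (lt_trans hlt (hb_lt a (List.mem_toFinset.mp ha))) (lt_irrefl a)
        have hbmem : b ∈ S ∪ (b :: lb).toFinset := by simp
        have hamem : a ∉ S ∪ (b :: lb).toFinset := by
          simp only [Finset.mem_union, List.toFinset_cons, Finset.mem_insert,
            List.mem_toFinset] at *
          push_neg
          exact ⟨haS, ne_of_lt hlt, halb⟩
        rw [shiftEdge, if_pos ⟨hbmem, hamem⟩, hE, Finset.erase_insert (by
          simp only [Finset.mem_union, List.mem_toFinset] at *; tauto),
          Finset.insert_union]
    have hS' : ∀ x ∈ insert a S, ∀ a' ∈ la, x < a' := by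
      intro x hx a' ha'
      rcases Finset.mem_insert.mp hx with rfl | hx
      · exact ha_lt a' ha'
      · exact hS x hx a' (by simp [ha'])
    calc (List.zip (b :: lb) (a :: la)).foldl (fun E p => shiftEdge p.1 p.2 E)
          (S ∪ (b :: lb).toFinset)
        = (List.zip lb la).foldl (fun E p => shiftEdge p.1 p.2 E)
          (insert a S ∪ lb.toFinset) := by rw [List.zip_cons_cons, List.foldl_cons, step]
      _ = insert a S ∪ la.toFinset := ih hla' hlb' (insert a S) hS'
      _ = S ∪ (a :: la).toFinset := by
          simp [Finset.insert_union, Finset.union_comm, Finset.union_insert]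

theorem mem_multiShift (n r : ℕ) (H : Finset (Finset ℕ))
    (hunif : ∀ E ∈ H, E ⊆ Finset.range n ∧ E.card = r)
    (A B : Finset ℕ) (hA : A.card = r) (hB : B.card = r)
    (hAB : List.Forall₂ (· ≤ ·) (A.sort (· ≤ ·)) (B.sort (· ≤ ·)))
    (hBH : B ∈ H) :
    A ∈ multiShift H B A := by
  have key := foldl_shiftEdge (A.sort (· ≤ ·)) (B.sort (· ≤ ·)) hAB
    (A.sortedLT_sort.pairwise) (B.sortedLT_sort.pairwise) ∅ (by simp)
  simp only [Finset.empty_union, Finset.sort_toFinset] at key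
  have := foldl_mem_foldl (List.zip (B.sort (· ≤ ·)) (A.sort (· ≤ ·))) H B hBH
  rw [key] at this
  exact this
end

section
/- Let $\mathcal{H}$ be a shifted $r$-uniform hypergraph on $[n]$, let $2 \le s \le r$, and let $I \subseteq [n]$ with $|I| \ge s$. Define the minimal edge $E_0(I) = I_s \cup J$, where $I_s$ is the set of $s$ smallest elements of $I$ and $J$ is the set of $r-s$ smallest elements of $[n] \setminus I_s$. Then $I$ is $s$-independent in $\mathcal{H}$ if and only if $E_0(I)$ is not an edge of $\mathcal{H}$. -/
/-- The set of the `s` smallest elements of `I`. -/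
def sSmallest (s : ℕ) (I : Finset ℕ) : Finset ℕ := ((I.sort (· ≤ ·)).take s).toFinset

/-- The minimal edge `E₀(I)`: the `s` smallest elements of `I` together with the
`r - s` smallest elements of `[n]` outside of them. -/
def minimalEdge (n r s : ℕ) (I : Finset ℕ) : Finset ℕ :=
  sSmallest s I ∪ sSmallest (r - s) (Finset.range n \ sSmallest s I)

lemma sSmallest_subset (s : ℕ) (I : Finset ℕ) : sSmallest s I ⊆ I := by
  intro x hx
  rw [sSmallest, List.mem_toFinset] at hx
  exact (Finset.mem_sort _).1 (List.mem_of_mem_take hx)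

lemma card_sSmallest (s : ℕ) (I : Finset ℕ) (h : s ≤ I.card) : (sSmallest s I).card = s := by
  rw [sSmallest, List.toFinset_card_of_nodup ((Finset.sort_nodup _ _).sublist
    (List.take_sublist _ _)), List.length_take, Finset.length_sort]
  exact min_eq_left h

lemma sSmallest_lt {s : ℕ} {I : Finset ℕ} {a b : ℕ} (ha : a ∈ sSmallest s I)
    (hb : b ∈ I) (hb' : b ∉ sSmallest s I) : a < b := by
  rw [sSmallest, List.mem_toFinset] at ha hb'
  have hbl : b ∈ I.sort (· ≤ ·) := (Finset.mem_sort _).2 hb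
  have hsp := I.sortedLT_sort.pairwise
  rw [← List.take_append_drop s (I.sort (· ≤ ·))] at hsp
  have hb2 : b ∈ List.drop s (I.sort (· ≤ ·)) := by
    have hb3 : b ∈ List.take s (I.sort (· ≤ ·)) ++ List.drop s (I.sort (· ≤ ·)) := by
      rw [List.take_append_drop]; exact hbl
    rcases List.mem_append.1 hb3 with h | h
    · exact absurd h hb'
    · exact h
  exact (List.pairwise_append.1 hsp).2.2 a ha b hb2

/-- A hypergraph fixed by `shiftSet i j` is closed under `shiftEdge i j`. -/
lemma mem_of_shift {i j : ℕ} {H : Finset (Finset ℕ)} (h : shiftSet i j H = H)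
    {E : Finset ℕ} (hE : E ∈ H) : shiftEdge i j E ∈ H := by
  have : shiftEdge i j E ∈ shiftSet i j H :=
    Finset.mem_union_left _ (Finset.mem_image_of_mem _ hE)
  rwa [h] at this

theorem sIndep_iff_minimalEdge_not_mem (n r s : ℕ) (hs2 : 2 ≤ s) (hsr : s ≤ r) (hrn : r ≤ n)
    (H : Finset (Finset ℕ))
    (hshift : ∀ i j : ℕ, j < i → i < n → shiftSet i j H = H)
    (hunif : ∀ E ∈ H, E ⊆ Finset.range n ∧ E.card = r)
    (I : Finset ℕ) (hI : I ⊆ Finset.range n) (hIs : s ≤ I.card) :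
    (∀ E ∈ H, (I ∩ E).card < s) ↔ minimalEdge n r s I ∉ H := by
  set Is := sSmallest s I with hIsdef
  set R := Finset.range n \ Is with hRdef
  set J := sSmallest (r - s) R with hJdef
  set E₀ := minimalEdge n r s I with hE₀def
  have hIsI : Is ⊆ I := sSmallest_subset s I
  have hIscard : Is.card = s := card_sSmallest s I hIs
  have hIsn : Is ⊆ Finset.range n := hIsI.trans hI
  have hRcard : R.card = n - s := by
    rw [hRdef, Finset.card_sdiff_of_subset hIsn, Finset.card_range, hIscard]
  have hJR : J ⊆ R := sSmallest_subset _ _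
  have hJcard : J.card = r - s := by
    apply card_sSmallest
    rw [hRcard]; omega
  have hE₀eq : E₀ = Is ∪ J := rfl
  have hdisj : Disjoint Is J := by
    have : Disjoint Is R := Finset.disjoint_sdiff
    exact this.mono_right hJR
  have hE₀card : E₀.card = r := by
    rw [hE₀eq, Finset.card_union_of_disjoint hdisj, hIscard, hJcard]; omega
  have hIsE₀ : Is ⊆ E₀ := by rw [hE₀eq]; exact Finset.subset_union_left
  constructor
  · intro hind hmem
    have := hind E₀ hmem
    have hsub : Is ⊆ I ∩ E₀ := Finset.subset_inter hIsI hIsE₀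
    have := Finset.card_le_card hsub
    omega
  · intro hnot
    intro E hE
    by_contra hge
    push_neg at hge
    apply hnot
    clear hs2
    -- strong induction on the sum of elements of E
    have key : ∀ m : ℕ, ∀ E : Finset ℕ, (∑ x ∈ E, x) ≤ m → E ∈ H → s ≤ (I ∩ E).card →
        E₀ ∈ H := by
      intro m
      induction m using Nat.strong_induction_on with
      | _ m ih =>
        intro E hsum hE hint
        by_cases heq : E = E₀
        · rwa [heq] at hE
        -- find a shift i → j
        obtain ⟨hEn, hEcard⟩ := hunif E hE
        have step : ∃ i ∈ E, ∃ j ∉ E, j < i ∧ j < n ∧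
            s ≤ (I ∩ insert j (E.erase i)).card := by
          by_cases hIsE : Is ⊆ E
          · -- case 2 : Is ⊆ E, E ≠ E₀
            have hJE : ¬ J ⊆ E := by
              intro hJE
              exact heq (Finset.eq_of_subset_of_card_le
                (by rw [hE₀eq] at *; exact Finset.union_subset hIsE hJE) (by omega)).symm
            obtain ⟨j, hjJ, hjE⟩ := Finset.not_subset.1 hJE
            have hEE₀ : ¬ E ⊆ E₀ := by
              intro h
              exact heq (Finset.eq_of_subset_of_card_le h (by omega))
            obtain ⟨i, hiE, hiE₀⟩ := Finset.not_subset.1 hEE₀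
            have hiR : i ∈ R := by
              rw [hRdef, Finset.mem_sdiff]
              exact ⟨hEn hiE, fun h => hiE₀ (hIsE₀ h)⟩
            have hiJ : i ∉ J := fun h => hiE₀ (by rw [hE₀eq]; exact Finset.mem_union_right _ h)
            have hji : j < i := sSmallest_lt hjJ hiR hiJ
            have hjn : j < n := by
              have := hJR hjJ
              rw [hRdef, Finset.mem_sdiff, Finset.mem_range] at this
              exact this.1
            refine ⟨i, hiE, j, hjE, hji, hjn, ?_⟩
            have hsub : Is ⊆ I ∩ insert j (E.erase i) := by
              apply Finset.subset_inter hIsI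
              intro x hx
              apply Finset.mem_insert_of_mem
              rw [Finset.mem_erase]
              refine ⟨?_, hIsE hx⟩
              rintro rfl
              exact (Finset.mem_sdiff.1 hiR).2 hx
            calc s = Is.card := hIscard.symm
              _ ≤ _ := Finset.card_le_card hsub
          · -- case 1 : Is ⊄ E
            obtain ⟨j, hjIs, hjE⟩ := Finset.not_subset.1 hIsE
            have hIE : ¬ I ∩ E ⊆ Is := by
              intro h
              have := Finset.eq_of_subset_of_card_le h (by omega)
              rw [← this, Finset.mem_inter] at hjIs
              exact hjE hjIs.2
            obtain ⟨i, hiIE, hiIs⟩ := Finset.not_subset.1 hIE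
            rw [Finset.mem_inter] at hiIE
            have hji : j < i := sSmallest_lt hjIs hiIE.1 hiIs
            have hjn : j < n := Finset.mem_range.1 (hI (hIsI hjIs))
            refine ⟨i, hiIE.2, j, hjE, hji, hjn, ?_⟩
            have hsub : insert j ((I ∩ E).erase i) ⊆ I ∩ insert j (E.erase i) := by
              intro x hx
              rcases Finset.mem_insert.1 hx with rfl | hx
              · exact Finset.mem_inter.2 ⟨hIsI hjIs, Finset.mem_insert_self _ _⟩
              · rw [Finset.mem_erase, Finset.mem_inter] at hx
                exact Finset.mem_inter.2 ⟨hx.2.1, Finset.mem_insert_of_mem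
                  (Finset.mem_erase.2 ⟨hx.1, hx.2.2⟩)⟩
            have hjni : j ∉ (I ∩ E).erase i := fun h =>
              hjE (Finset.mem_inter.1 (Finset.mem_of_mem_erase h)).2
            have : (insert j ((I ∩ E).erase i)).card = (I ∩ E).card := by
              rw [Finset.card_insert_of_notMem hjni,
                Finset.card_erase_of_mem (Finset.mem_inter.2 hiIE)]
              have : 1 ≤ (I ∩ E).card := Finset.card_pos.2 ⟨i, Finset.mem_inter.2 hiIE⟩
              omega
            calc s ≤ (I ∩ E).card := hint
              _ = _ := this.symm
              _ ≤ _ := Finset.card_le_card hsub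
        obtain ⟨i, hiE, j, hjE, hji, hjn, hcard'⟩ := step
        have hin : i < n := Finset.mem_range.1 (hEn hiE)
        have hE' : insert j (E.erase i) ∈ H := by
          have := mem_of_shift (hshift i j hji hin) hE
          rwa [shiftEdge, if_pos ⟨hiE, hjE⟩] at this
        have hsum' : (∑ x ∈ insert j (E.erase i), x) < ∑ x ∈ E, x := by
          rw [Finset.sum_insert (fun h => hjE (Finset.mem_of_mem_erase h)),
            ← Finset.sum_erase_add E _ hiE]
          omega
        exact ih (∑ x ∈ insert j (E.erase i), x) (by omega) _ le_rfl hE' hcard'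
    exact key (∑ x ∈ E, x) E le_rfl hE hge
end

section
/- Let $\mathcal{H}$ be a shifted $3$-graph on $[n]$ and suppose $\mathcal{H}' = \mathcal{H} + \{i,j,k\}$ (with $i<j<k$) is also shifted. Then $i_2(\mathcal{H}') = i_2(\mathcal{H}) - c_{ijk}$, where $c_{ijk} = 2^{n-1}$ if $\{i,j,k\}=\{0,1,2\}$; $c_{ijk} = 2^{n-k}$ if $i=0$, $j=1$, $k \ne 2$; $c_{ijk} = 2^{n-k-1}$ if $i=0$ and $j > 1$; and $c_{ijk} = 0$ if $i \ne 0$. -/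
/-- The cost `c_{ijk}` of adding the edge `{i,j,k}` (with `i < j < k`) to a shifted
`3`-graph on `[n]`. -/
def cost (n i j k : ℕ) : ℕ :=
  if i = 0 ∧ j = 1 ∧ k = 2 then 2 ^ (n - 1)
  else if i = 0 ∧ j = 1 then 2 ^ (n - k)
  else if i = 0 then 2 ^ (n - k - 1)
  else 0

open Finset

lemma mem_shift {n : ℕ} {H : Finset (Finset ℕ)}
    (hsh : ∀ a b : ℕ, b < a → a < n → shiftSet a b H = H)
    {E : Finset ℕ} (hE : E ∈ H) {p q : ℕ} (hq : q < p) (hp : p < n) :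
    shiftEdge p q E ∈ H := by
  rw [← hsh p q hq hp]
  exact mem_union_left _ (mem_image_of_mem _ hE)

lemma dom3 {n : ℕ} {H : Finset (Finset ℕ)}
    (hsh : ∀ a b : ℕ, b < a → a < n → shiftSet a b H = H)
    {a b c a' b' c' : ℕ} (h1 : a < b) (h2 : b < c) (h3 : c < n)
    (ha : a' ≤ a) (hb : b' ≤ b) (hc : c' ≤ c) (h1' : a' < b') (h2' : b' < c')
    (hm : ({a, b, c} : Finset ℕ) ∈ H) : ({a', b', c'} : Finset ℕ) ∈ H := by
  have step1 : ({a', b, c} : Finset ℕ) ∈ H := by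
    rcases eq_or_lt_of_le ha with rfl | hlt
    · exact hm
    · have h := mem_shift hsh hm hlt (by omega)
      have e : shiftEdge a a' {a, b, c} = {a', b, c} := by
        unfold shiftEdge
        rw [if_pos ⟨by simp, by simp; omega⟩]
        ext x; simp; omega
      rwa [e] at h
  have step2 : ({a', b', c} : Finset ℕ) ∈ H := by
    rcases eq_or_lt_of_le hb with rfl | hlt
    · exact step1
    · have h := mem_shift hsh step1 hlt (by omega)
      have e : shiftEdge b b' {a', b, c} = {a', b', c} := by
        unfold shiftEdge
        rw [if_pos ⟨by simp, by simp; omega⟩]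
        ext x; simp; omega
      rwa [e] at h
  rcases eq_or_lt_of_le hc with rfl | hlt
  · exact step2
  · have h := mem_shift hsh step2 hlt h3
    have e : shiftEdge c c' {a', b', c} = {a', b', c'} := by
      unfold shiftEdge
      rw [if_pos ⟨by simp, by simp; omega⟩]
      ext x; simp; omega
    rwa [e] at h

lemma sorted3 {s : Finset ℕ} (h : s.card = 3) :
    ∃ a b c : ℕ, a < b ∧ b < c ∧ s = {a, b, c} := by
  rcases Finset.card_eq_three.mp h with ⟨x, y, z, hxy, hxz, hyz, rfl⟩
  rcases Nat.lt_or_ge x y with h1 | h1 <;> rcases Nat.lt_or_ge y z with h2 | h2 <;>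
    rcases Nat.lt_or_ge x z with h3 | h3
  · exact ⟨x, y, z, h1, h2, rfl⟩
  · exact ⟨x, y, z, h1, h2, rfl⟩
  · exact ⟨x, z, y, by omega, by omega, by ext w; simp; tauto⟩
  · exact ⟨z, x, y, by omega, by omega, by ext w; simp; tauto⟩
  · exact ⟨y, x, z, by omega, by omega, by ext w; simp; tauto⟩
  · exact ⟨y, z, x, by omega, by omega, by ext w; simp; tauto⟩
  · exact ⟨y, z, x, by omega, by omega, by ext w; simp; tauto⟩
  · exact ⟨z, y, x, by omega, by omega, by ext w; simp; tauto⟩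

lemma triple_eq {a b c i j k : ℕ} (h1 : a < b) (h2 : b < c) (h1' : i < j) (h2' : j < k)
    (heq : ({a, b, c} : Finset ℕ) = {i, j, k}) : a = i ∧ b = j ∧ c = k := by
  have hi := Finset.ext_iff.mp heq i
  have hj := Finset.ext_iff.mp heq j
  have hk := Finset.ext_iff.mp heq k
  have ha := Finset.ext_iff.mp heq a
  have hb := Finset.ext_iff.mp heq b
  have hc := Finset.ext_iff.mp heq c
  simp at hi hj hk ha hb hc
  omega

lemma newEdges {n i j k : ℕ} {H : Finset (Finset ℕ)} (hij : i < j) (hjk : j < k) (hkn : k < n)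
    (hsh' : ∀ a b : ℕ, b < a → a < n →
      shiftSet a b (insert ({i, j, k} : Finset ℕ) H) = insert ({i, j, k} : Finset ℕ) H)
    {a b c : ℕ} (hab : a < b) (hbc : b < c) (ha : a ≤ i) (hb : b ≤ j) (hc : c ≤ k)
    (hne : ¬(a = i ∧ b = j ∧ c = k)) : ({a, b, c} : Finset ℕ) ∈ H := by
  have h : ({a, b, c} : Finset ℕ) ∈ insert ({i, j, k} : Finset ℕ) H :=
    dom3 hsh' hij hjk hkn ha hb hc hab hbc (Finset.mem_insert_self _ _)
  rcases Finset.mem_insert.mp h with heq | h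
  · exact absurd (triple_eq hab hbc hij hjk heq) hne
  · exact h

lemma count_inter_eq (n t : ℕ) (ht : t ≤ n) (S : Finset ℕ) (hS : S ⊆ Finset.range t) :
    ((Finset.range n).powerset.filter (fun I => I ∩ Finset.range t = S)).card = 2 ^ (n - t) := by
  have hcard : (Finset.range n \ Finset.range t).powerset.card = 2 ^ (n - t) := by
    rw [Finset.card_powerset, Finset.card_sdiff_of_subset (by
      exact Finset.range_subset_range.mpr ht), Finset.card_range, Finset.card_range]
  rw [← hcard]
  apply Finset.card_bij' (fun I _ => I \ Finset.range t) (fun T _ => S ∪ T)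
  · intro I hI
    simp only [Finset.mem_filter, Finset.mem_powerset] at hI
    rw [Finset.mem_powerset]
    exact Finset.sdiff_subset_sdiff hI.1 le_rfl
  · intro T hT
    rw [Finset.mem_powerset] at hT
    simp only [Finset.mem_filter, Finset.mem_powerset]
    constructor
    · apply Finset.union_subset (hS.trans (Finset.range_subset_range.mpr ht))
      exact hT.trans (Finset.sdiff_subset)
    · ext x
      simp only [Finset.mem_inter, Finset.mem_union, Finset.mem_range]
      constructor
      · rintro ⟨hx | hx, hxt⟩
        · exact hx
        · exact absurd (Finset.mem_sdiff.mp (hT hx)).2 (by simp [hxt])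
      · intro hx
        exact ⟨Or.inl hx, Finset.mem_range.mp (hS hx)⟩
  · intro I hI
    simp only [Finset.mem_filter, Finset.mem_powerset] at hI
    ext x
    have h1 := Finset.ext_iff.mp hI.2 x
    simp only [Finset.mem_inter, Finset.mem_union, Finset.mem_sdiff, Finset.mem_range] at h1 ⊢
    by_cases hxt : x < t <;> tauto
  · intro T hT
    rw [Finset.mem_powerset] at hT
    ext x
    have hx1 : x ∈ S → x < t := fun h => Finset.mem_range.mp (hS h)
    have hx2 : x ∈ T → ¬ x < t := fun h => by
      simpa using (Finset.mem_sdiff.mp (hT h)).2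
    simp only [Finset.mem_sdiff, Finset.mem_union, Finset.mem_range]
    tauto

lemma card_filter_inter_mem (n t : ℕ) (ht : t ≤ n) (S : Finset (Finset ℕ))
    (hS : ∀ s ∈ S, s ⊆ Finset.range t) :
    ((Finset.range n).powerset.filter (fun I => I ∩ Finset.range t ∈ S)).card
      = S.card * 2 ^ (n - t) := by
  have heq : (Finset.range n).powerset.filter (fun I => I ∩ Finset.range t ∈ S)
      = S.biUnion (fun s => (Finset.range n).powerset.filter
          (fun I => I ∩ Finset.range t = s)) := by
    ext I
    simp only [Finset.mem_filter, Finset.mem_biUnion]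
    constructor
    · rintro ⟨h1, h2⟩; exact ⟨_, h2, h1, rfl⟩
    · rintro ⟨s, hs, h1, h2⟩; exact ⟨h1, h2 ▸ hs⟩
  rw [heq, Finset.card_biUnion, Finset.sum_congr rfl
    (fun s hs => count_inter_eq n t ht s (hS s hs)), Finset.sum_const, smul_eq_mul]
  intro s hs s' hs' hne
  simp only [Finset.disjoint_left, Finset.mem_filter]
  rintro I ⟨_, h1⟩ ⟨_, h2⟩
  exact hne (h1 ▸ h2)

lemma two_mem {I : Finset ℕ} {i j k : ℕ} (hij : i < j) (hjk : j < k)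
    (h : 2 ≤ (I ∩ ({i, j, k} : Finset ℕ)).card) :
    (j ∈ I ∧ k ∈ I) ∨ (i ∈ I ∧ j ∈ I) ∨ (i ∈ I ∧ k ∈ I) := by
  by_contra hcon
  push_neg at hcon
  have hle : (I ∩ ({i, j, k} : Finset ℕ)).card ≤ 1 := by
    apply Finset.card_le_one.mpr
    intro a ha b hb
    simp only [Finset.mem_inter, Finset.mem_insert, Finset.mem_singleton] at ha hb
    obtain ⟨haI, ha3⟩ := ha
    obtain ⟨hbI, hb3⟩ := hb
    rcases ha3 with rfl | rfl | rfl <;> rcases hb3 with rfl | rfl | rfl <;> tauto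
  omega

lemma notIndep {I F : Finset ℕ} {p q : ℕ} (hpF : p ∈ F) (hqF : q ∈ F)
    (hpI : p ∈ I) (hqI : q ∈ I) (hne : p ≠ q) : ¬ (I ∩ F).card < 2 := by
  have : 1 < (I ∩ F).card := Finset.one_lt_card.mpr
    ⟨p, Finset.mem_inter.mpr ⟨hpI, hpF⟩, q, Finset.mem_inter.mpr ⟨hqI, hqF⟩, hne⟩
  omega

lemma split_count (n : ℕ) (H : Finset (Finset ℕ)) (e : Finset ℕ) :
    indepCount n 2 H = indepCount n 2 (insert e H) +
      ((Finset.range n).powerset.filter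
        (fun I => (∀ E ∈ H, (I ∩ E).card < 2) ∧ 2 ≤ (I ∩ e).card)).card := by
  unfold indepCount
  have key := Finset.card_filter_add_card_filter_not
    (s := (Finset.range n).powerset.filter (fun I => ∀ E ∈ H, (I ∩ E).card < 2))
    (p := fun I => (I ∩ e).card < 2)
  rw [Finset.filter_filter, Finset.filter_filter] at key
  rw [← key]
  congr 1
  · apply congrArg Finset.card
    apply Finset.filter_congr
    intro I _
    rw [Finset.forall_mem_insert]
    tauto
  · apply congrArg Finset.card
    apply Finset.filter_congr
    intro I _
    simp only [Nat.not_lt]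

theorem cost_of_added_edge (n i j k : ℕ) (hij : i < j) (hjk : j < k) (hkn : k < n)
    (H : Finset (Finset ℕ))
    (hunif : ∀ F ∈ H, F ⊆ Finset.range n ∧ F.card = 3)
    (hE : ({i, j, k} : Finset ℕ) ∉ H)
    (hsh : ∀ a b : ℕ, b < a → a < n → shiftSet a b H = H)
    (hsh' : ∀ a b : ℕ, b < a → a < n →
      shiftSet a b (insert ({i, j, k} : Finset ℕ) H) = insert ({i, j, k} : Finset ℕ) H) :
    indepCount n 2 H = indepCount n 2 (insert ({i, j, k} : Finset ℕ) H) + cost n i j k := by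
  rw [split_count n H ({i, j, k} : Finset ℕ)]
  congr 1
  -- goal: B = cost n i j k
  by_cases hi0 : i = 0
  · subst hi0
    by_cases hj1 : j = 1
    · subst hj1
      by_cases hk2 : k = 2
      · subst hk2
        -- case {0,1,2}
        have hH : H = ∅ := by
          rw [Finset.eq_empty_iff_forall_notMem]
          intro E hEH
          obtain ⟨hEn, hE3⟩ := hunif E hEH
          obtain ⟨a, b, c, hab, hbc, rfl⟩ := sorted3 hE3
          have hcn : c < n := by
            have : c ∈ Finset.range n := hEn (by simp)
            simpa using this
          exact hE (dom3 hsh hab hbc hcn (by omega) (by omega) (by omega)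
            (by omega) (by omega) hEH)
        subst hH
        have hr : ({0, 1, 2} : Finset ℕ) = Finset.range 3 := by decide
        have hpred : ∀ I ∈ (Finset.range n).powerset,
            (((∀ E ∈ (∅ : Finset (Finset ℕ)), (I ∩ E).card < 2) ∧
              2 ≤ (I ∩ ({0, 1, 2} : Finset ℕ)).card) ↔
            (I ∩ Finset.range 3 ∈
              ({{0,1},{0,2},{1,2},{0,1,2}} : Finset (Finset ℕ)))) := by
          intro I _
          rw [hr]
          have key : ∀ S ∈ (Finset.range 3).powerset, (2 ≤ S.card ↔
              S ∈ ({{0,1},{0,2},{1,2},{0,1,2}} : Finset (Finset ℕ))) := by decide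
          have := key (I ∩ Finset.range 3)
            (Finset.mem_powerset.mpr Finset.inter_subset_right)
          simp only [Finset.notMem_empty, false_implies, implies_true, true_and]
          exact this
        rw [Finset.filter_congr hpred,
          card_filter_inter_mem n 3 (by omega) _ (by decide)]
        have h4 : ({{0,1},{0,2},{1,2},{0,1,2}} : Finset (Finset ℕ)).card = 4 := by decide
        rw [h4]
        show 4 * 2 ^ (n - 3) = cost n 0 1 2
        simp only [cost, and_self, if_true, if_pos trivial]
        have hn1 : n - 1 = 2 + (n - 3) := by omega
        rw [hn1, pow_add]
        norm_num
      · -- case {0,1,k}, k ≥ 3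
        have hk3 : 3 ≤ k := by omega
        have hA : ∀ c : ℕ, 2 ≤ c → c < k → ({0, 1, c} : Finset ℕ) ∈ H := by
          intro c h2 hc
          exact newEdges hij hjk hkn hsh' (by omega) (by omega) le_rfl le_rfl (by omega)
            (by omega)
        have hB : ∀ E ∈ H, E ⊆ Finset.range k := by
          intro E hEH
          obtain ⟨hEn, hE3⟩ := hunif E hEH
          obtain ⟨a, b, c, hab, hbc, rfl⟩ := sorted3 hE3
          have hcn : c < n := by
            have : c ∈ Finset.range n := hEn (by simp)
            simpa using this
          have hck : c < k := by
            by_contra hge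
            exact hE (dom3 hsh hab hbc hcn (by omega) (by omega) (by omega) (by omega)
              (by omega) hEH)
          intro x hx
          simp only [Finset.mem_insert, Finset.mem_singleton] at hx
          simp only [Finset.mem_range]
          omega
        have hpred : ∀ I ∈ (Finset.range n).powerset,
            (((∀ E ∈ H, (I ∩ E).card < 2) ∧
              2 ≤ (I ∩ ({0, 1, k} : Finset ℕ)).card) ↔
            (I ∩ Finset.range (k + 1) ∈ ({{0, k}, {1, k}} : Finset (Finset ℕ)))) := by
          intro I _
          simp only [Finset.mem_insert, Finset.mem_singleton]
          constructor
          · rintro ⟨hind, hcard⟩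
            have not01 : ¬(0 ∈ I ∧ 1 ∈ I) := by
              rintro ⟨h0, h1⟩
              exact notIndep (F := ({0, 1, 2} : Finset ℕ)) (by simp) (by simp) h0 h1
                (by omega) (hind _ (hA 2 le_rfl (by omega)))
            have main : ∀ z : ℕ, z < 2 → z ∈ I → k ∈ I →
                I ∩ Finset.range (k + 1) = {z, k} := by
              intro z hz2 hzI hkI
              ext x
              simp only [Finset.mem_inter, Finset.mem_range, Finset.mem_insert,
                Finset.mem_singleton]
              constructor
              · rintro ⟨hxI, hxk⟩
                by_contra hcon
                push_neg at hcon
                have hsplit : (x < 2) ∨ (2 ≤ x ∧ x < k) := by omega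
                rcases hsplit with hx2 | ⟨hx2, hxk'⟩
                · exact not01 (by rcases hz2 with _ | _ <;> rcases hx2 with _ | _ <;>
                    simp_all <;> omega)
                · exact notIndep (F := ({0, 1, x} : Finset ℕ)) (by simp; omega)
                    (by simp) hzI hxI (by omega) (hind _ (hA x hx2 hxk'))
              · rintro (rfl | rfl)
                · exact ⟨hzI, by omega⟩
                · exact ⟨hkI, by omega⟩
            rcases two_mem hij hjk hcard with ⟨h1, h2⟩ | ⟨h1, h2⟩ | ⟨h1, h2⟩
            · exact Or.inr (main 1 (by omega) h1 h2)
            · exact absurd ⟨h1, h2⟩ not01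
            · exact Or.inl (main 0 (by omega) h1 h2)
          · intro h
            have main : ∀ z : ℕ, z < 2 → I ∩ Finset.range (k + 1) = {z, k} →
                (∀ E ∈ H, (I ∩ E).card < 2) ∧
                  2 ≤ (I ∩ ({0, 1, k} : Finset ℕ)).card := by
              intro z hz2 hzeq
              have hzI : z ∈ I := by
                have : z ∈ I ∩ Finset.range (k + 1) := by
                  rw [hzeq]; simp
                exact (Finset.mem_inter.mp this).1
              have hkI : k ∈ I := by
                have : k ∈ I ∩ Finset.range (k + 1) := by
                  rw [hzeq]; simp
                exact (Finset.mem_inter.mp this).1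
              constructor
              · intro E hEH
                have hle : (I ∩ E).card ≤ 1 := by
                  apply Finset.card_le_one.mpr
                  intro a ha b hb
                  obtain ⟨haI, haE⟩ := Finset.mem_inter.mp ha
                  obtain ⟨hbI, hbE⟩ := Finset.mem_inter.mp hb
                  have hak : a < k := by simpa using hB E hEH haE
                  have hbk : b < k := by simpa using hB E hEH hbE
                  have ha' : a ∈ ({z, k} : Finset ℕ) := by
                    rw [← hzeq]; simp [haI]; omega
                  have hb' : b ∈ ({z, k} : Finset ℕ) := by
                    rw [← hzeq]; simp [hbI]; omega
                  simp only [Finset.mem_insert, Finset.mem_singleton] at ha' hb'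
                  omega
                omega
              · have : 1 < (I ∩ ({0, 1, k} : Finset ℕ)).card :=
                  Finset.one_lt_card.mpr ⟨z, Finset.mem_inter.mpr ⟨hzI, by simp; omega⟩,
                    k, Finset.mem_inter.mpr ⟨hkI, by simp⟩, by omega⟩
                omega
            rcases h with h | h
            · exact main 0 (by omega) h
            · exact main 1 (by omega) h
        rw [Finset.filter_congr hpred,
          card_filter_inter_mem n (k + 1) (by omega) _ (by
            intro s hs
            simp only [Finset.mem_insert, Finset.mem_singleton] at hs
            rcases hs with rfl | rfl <;> (intro x hx; simp at hx ⊢; omega))]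
        have h2 : ({{0, k}, {1, k}} : Finset (Finset ℕ)).card = 2 := by
          rw [Finset.card_insert_of_notMem, Finset.card_singleton]
          simp only [Finset.mem_singleton]
          intro heq
          have := Finset.ext_iff.mp heq 0
          simp at this
          omega
        rw [h2]
        show 2 * 2 ^ (n - (k + 1)) = cost n 0 1 k
        simp only [cost, hk2, and_true, and_false, if_false, if_pos trivial, true_and]
        have : n - k = 1 + (n - (k + 1)) := by omega
        rw [this, pow_add]
        norm_num
    · -- case {0,j,k}, j ≥ 2
      have hj2 : 2 ≤ j := by omega
      have hF1 : ∀ b c : ℕ, 1 ≤ b → b < c → b ≤ j → c ≤ k → ¬(b = j ∧ c = k) →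
          ({0, b, c} : Finset ℕ) ∈ H := by
        intro b c h1 h2 h3 h4 h5
        exact newEdges hij hjk hkn hsh' (by omega) h2 le_rfl h3 h4 (by tauto)
      have hpred : ∀ I ∈ (Finset.range n).powerset,
          (((∀ E ∈ H, (I ∩ E).card < 2) ∧
            2 ≤ (I ∩ ({0, j, k} : Finset ℕ)).card) ↔
          (I ∩ Finset.range (k + 1) ∈ ({{j, k}} : Finset (Finset ℕ)))) := by
        intro I _
        simp only [Finset.mem_singleton]
        constructor
        · rintro ⟨hind, hcard⟩
          have n0j : ¬(0 ∈ I ∧ j ∈ I) := by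
            rintro ⟨h0, h1⟩
            exact notIndep (F := ({0, 1, j} : Finset ℕ)) (by simp) (by simp) h0 h1
              (by omega) (hind _ (hF1 1 j le_rfl (by omega) (by omega) (by omega)
                (by omega)))
          have n0k : ¬(0 ∈ I ∧ k ∈ I) := by
            rintro ⟨h0, h1⟩
            exact notIndep (F := ({0, 1, k} : Finset ℕ)) (by simp) (by simp) h0 h1
              (by omega) (hind _ (hF1 1 k le_rfl (by omega) (by omega) le_rfl (by omega)))
          obtain ⟨hjI, hkI⟩ : j ∈ I ∧ k ∈ I := by
            rcases two_mem hij hjk hcard with h | h | h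
            · exact h
            · exact absurd h n0j
            · exact absurd h n0k
          have h0I : 0 ∉ I := fun h0 => n0j ⟨h0, hjI⟩
          ext x
          simp only [Finset.mem_inter, Finset.mem_range, Finset.mem_insert,
            Finset.mem_singleton]
          constructor
          · rintro ⟨hxI, hxk⟩
            by_contra hcon
            push_neg at hcon
            have hsplit : x = 0 ∨ (1 ≤ x ∧ x < j) ∨ (j < x ∧ x < k) := by omega
            rcases hsplit with rfl | ⟨hx1, hxj⟩ | ⟨hxj, hxk'⟩
            · exact h0I hxI
            · exact notIndep (F := ({0, x, j} : Finset ℕ)) (by simp) (by simp) hxI hjI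
                (by omega) (hind _ (hF1 x j hx1 hxj (by omega) (by omega) (by omega)))
            · exact notIndep (F := ({0, j, x} : Finset ℕ)) (by simp) (by simp) hjI hxI
                (by omega) (hind _ (hF1 j x (by omega) hxj le_rfl (by omega) (by omega)))
          · rintro (rfl | rfl)
            · exact ⟨hjI, by omega⟩
            · exact ⟨hkI, by omega⟩
        · intro h
          have hjI : j ∈ I := by
            have : j ∈ I ∩ Finset.range (k + 1) := by rw [h]; simp
            exact (Finset.mem_inter.mp this).1
          have hkI : k ∈ I := by
            have : k ∈ I ∩ Finset.range (k + 1) := by rw [h]; simp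
            exact (Finset.mem_inter.mp this).1
          constructor
          · intro E hEH
            by_contra hge
            push_neg at hge
            have main : ∀ p q : ℕ, p ∈ I ∩ E → q ∈ I ∩ E → p < q → False := by
              intro p q hp hq hpq
              obtain ⟨hpI, hpE⟩ := Finset.mem_inter.mp hp
              obtain ⟨hqI, hqE⟩ := Finset.mem_inter.mp hq
              have hpj : j ≤ p := by
                by_cases hpk : p < k + 1
                · have : p ∈ ({j, k} : Finset ℕ) := by
                    rw [← h]; simp [hpI]; omega
                  simp only [Finset.mem_insert, Finset.mem_singleton] at this
                  omega
                · omega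
              have hqk : k ≤ q := by
                by_cases hqk' : q < k + 1
                · have : q ∈ ({j, k} : Finset ℕ) := by
                    rw [← h]; simp [hqI]; omega
                  simp only [Finset.mem_insert, Finset.mem_singleton] at this
                  omega
                · omega
              obtain ⟨hEn, hE3⟩ := hunif E hEH
              obtain ⟨a, b, c, hab, hbc, rfl⟩ := sorted3 hE3
              have hcn : c < n := by
                have : c ∈ Finset.range n := hEn (by simp)
                simpa using this
              simp only [Finset.mem_insert, Finset.mem_singleton] at hpE hqE
              exact hE (dom3 hsh hab hbc hcn (by omega) (by omega) (by omega) (by omega)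
                hjk hEH)
            have h1 : 1 < (I ∩ E).card := by omega
            obtain ⟨p, hp, q, hq, hpq⟩ := Finset.one_lt_card.mp h1
            rcases Nat.lt_or_ge p q with hlt | hge'
            · exact main p q hp hq hlt
            · exact main q p hq hp (by omega)
          · have : 1 < (I ∩ ({0, j, k} : Finset ℕ)).card :=
              Finset.one_lt_card.mpr ⟨j, Finset.mem_inter.mpr ⟨hjI, by simp⟩,
                k, Finset.mem_inter.mpr ⟨hkI, by simp⟩, by omega⟩
            omega
      rw [Finset.filter_congr hpred,
        card_filter_inter_mem n (k + 1) (by omega) _ (by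
          intro s hs
          simp only [Finset.mem_singleton] at hs
          subst hs
          intro x hx
          simp at hx ⊢
          omega)]
      rw [Finset.card_singleton]
      show 1 * 2 ^ (n - (k + 1)) = cost n 0 j k
      simp only [cost, hj1, false_and, and_false, if_false, if_pos rfl, one_mul,
        if_true, Nat.sub_sub]

  · -- case i ≠ 0
    have hB : ((Finset.range n).powerset.filter
        (fun I => (∀ E ∈ H, (I ∩ E).card < 2) ∧
          2 ≤ (I ∩ ({i, j, k} : Finset ℕ)).card)).card = 0 := by
      rw [Finset.card_eq_zero, Finset.filter_eq_empty_iff]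
      rintro I _ ⟨hind, hcard⟩
      rcases two_mem hij hjk hcard with ⟨h1, h2⟩ | ⟨h1, h2⟩ | ⟨h1, h2⟩
      · exact notIndep (F := ({0, j, k} : Finset ℕ)) (by simp) (by simp) h1 h2 (by omega)
          (hind _ (newEdges hij hjk hkn hsh' (by omega) hjk (by omega) le_rfl le_rfl
            (by omega)))
      · exact notIndep (F := ({0, i, j} : Finset ℕ)) (by simp) (by simp) h1 h2 (by omega)
          (hind _ (newEdges hij hjk hkn hsh' (by omega) hij (by omega) (by omega)
            (by omega) (by omega)))
      · exact notIndep (F := ({0, i, k} : Finset ℕ)) (by simp) (by simp) h1 h2 (by omega)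
          (hind _ (newEdges hij hjk hkn hsh' (by omega) (by omega) (by omega) (by omega)
            le_rfl (by omega)))
    rw [hB]
    simp [cost, hi0]
end
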